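/- For λ ∈ ℂ* and α ∈ ℂ*, the Virasoro module Ω(λ, α) = ℂ[t] with action L_i·f(t) = λ^i (t - iα) f(t - i) is simple: every nonzero subspace of ℂ[t] invariant under all L_i (i ∈ ℤ) equals ℂ[t]. -/

import Mathlib

open Polynomial

lemma lemA (p : Submodule ℂ ℂ[X]) :
    ∀ n : ℕ, ∀ Q : Polynomial ℂ[X], Q.natDegree ≤ n →
      (∀ i : ℤ, Q.eval (C (i:ℂ)) ∈ p) → Q.coeff n ∈ p := by
  intro n
  induction n with
  | zero =>
    intro Q _ he
    have h0 := he 0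
    simpa [coeff_zero_eq_eval_zero] using h0
  | succ n ih =>
    intro Q hd he
    by_cases h : Q.natDegree ≤ n
    · rw [coeff_eq_zero_of_natDegree_lt (by omega)]
      exact p.zero_mem
    · have hQdeg : Q.natDegree = n + 1 := by omega
      have hQ0 : Q ≠ 0 := fun h0 => by simp [h0] at hQdeg
      set R : Polynomial ℂ[X] := Q.comp (X + C 1) - Q with hR
      -- leading coeff of comp
      have hq1 : (X + C (1 : ℂ[X])).natDegree = 1 := natDegree_X_add_C 1
      have hlc : (Q.comp (X + C 1)).leadingCoeff = Q.leadingCoeff := by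
        rw [leadingCoeff_comp (by rw [hq1]; norm_num),
          (monic_X_add_C (1:ℂ[X])).leadingCoeff, one_pow, mul_one]
      have hnd : (Q.comp (X + C 1)).natDegree = Q.natDegree := by
        rw [natDegree_comp, hq1, mul_one]
      have hcomp0 : Q.comp (X + C 1) ≠ 0 := by
        intro h0
        exact hQ0 (leadingCoeff_eq_zero.mp (by rw [← hlc, h0, leadingCoeff_zero]))
      have hdeg : (Q.comp (X + C 1)).degree = Q.degree := by
        rw [degree_eq_natDegree hcomp0, degree_eq_natDegree hQ0, hnd]
      have hRdeg : R.degree < Q.degree := by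
        have := degree_sub_lt hdeg hcomp0 hlc
        rwa [hdeg] at this
      have hRnd : R.natDegree ≤ n := by
        by_cases hR0 : R = 0
        · simp [hR0]
        · have := natDegree_lt_natDegree hR0 hRdeg
          omega
      -- evaluations of R
      have heR : ∀ i : ℤ, R.eval (C (i:ℂ)) ∈ p := by
        intro i
        have hc : (C ((i+1:ℤ):ℂ) : ℂ[X]) = C ((i:ℤ):ℂ) + 1 := by
          rw [Int.cast_add, Int.cast_one, map_add, map_one]
        have : R.eval (C (i:ℂ)) = Q.eval (C ((i+1:ℤ):ℂ)) - Q.eval (C (i:ℂ)) := by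
          rw [hR, eval_sub, eval_comp, eval_add, eval_X, eval_C, hc]
        rw [this]
        exact p.sub_mem (he (i+1)) (he i)
      have hRc := ih R hRnd heR
      -- key coefficient identity
      have hkey : R.coeff n = ((n:ℂ[X]) + 1) * Q.coeff (n+1) := by
        have htay : Q.comp (X + C 1) = taylor 1 Q := (taylor_apply 1 Q).symm
        have h1 : (Q.comp (X + C 1)).coeff n = (hasseDeriv n Q).eval 1 := by
          rw [htay, taylor_coeff]
        have hhd : (hasseDeriv n Q).natDegree < 2 := by
          have := natDegree_hasseDeriv_le Q n
          omega
        have h2 : (hasseDeriv n Q).eval 1 =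
            (hasseDeriv n Q).coeff 0 + (hasseDeriv n Q).coeff 1 := by
          rw [eval_eq_sum_range' hhd]
          simp [Finset.sum_range_succ]
        have h3 : (hasseDeriv n Q).coeff 0 = Q.coeff n := by
          rw [hasseDeriv_coeff]; simp
        have h4 : (hasseDeriv n Q).coeff 1 = ((n:ℂ[X]) + 1) * Q.coeff (n+1) := by
          rw [hasseDeriv_coeff]
          rw [add_comm 1 n, Nat.choose_succ_self_right]
          push_cast
          ring
        have : R.coeff n = (Q.comp (X + C 1)).coeff n - Q.coeff n := by
          simp [hR]
        rw [this, h1, h2, h3, h4]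
        ring
      have hne : ((n:ℂ) + 1) ≠ 0 := Nat.cast_add_one_ne_zero n
      have : Q.coeff (n+1) = ((n:ℂ)+1)⁻¹ • R.coeff n := by
        rw [hkey, smul_eq_C_mul, ← mul_assoc]
        rw [show ((n:ℂ[X]) + 1) = C ((n:ℂ)+1) by simp [map_add, map_natCast]]
        rw [← map_mul, inv_mul_cancel₀ hne]
        simp
      rw [this]
      exact p.smul_mem _ hRc

/-- For `λ ∈ ℂ*` and `α ≠ 0`, the Virasoro module `Ω(λ, α) = ℂ[t]` with action
`L_i·f = λ^i (t - iα) f(t - i)` is simple. -/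
theorem stmt17 (lam α : ℂ) (hlam : lam ≠ 0) (hα : α ≠ 0)
    (L : ℤ → ℂ[X] → ℂ[X])
    (hL : ∀ (i : ℤ) (f : ℂ[X]),
      L i f = C (lam ^ i) * (X - C ((i : ℂ) * α)) * f.comp (X - C (i : ℂ)))
    (p : Submodule ℂ ℂ[X]) (hinv : ∀ (i : ℤ) (f : ℂ[X]), f ∈ p → L i f ∈ p)
    (hne : p ≠ ⊥) :
    p = ⊤ := by
  classical
  -- a nonzero element of p
  obtain ⟨f, hfp, hf0⟩ : ∃ f ∈ p, f ≠ 0 := by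
    by_contra h
    push_neg at h
    exact hne ((Submodule.eq_bot_iff p).mpr h)
  set n := f.natDegree with hn
  have ha : f.leadingCoeff ≠ 0 := leadingCoeff_ne_zero.mpr hf0
  set a := f.leadingCoeff with haa
  -- the big polynomial in the variable i
  set A : ℂ[X][X] := C X - C (C α) * X with hA
  set B : ℂ[X][X] := (f.map (C : ℂ →+* ℂ[X])).comp (C (X : ℂ[X]) - X) with hB
  set G : ℂ[X][X] := A * B with hG
  -- evaluations of G at integers
  have hGeval : ∀ i : ℤ, G.eval (C (i:ℂ)) =
      (X - C ((i:ℂ) * α)) * f.comp (X - C (i:ℂ)) := by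
    intro i
    rw [hG, eval_mul]
    have h1 : A.eval (C (i:ℂ)) = X - C ((i:ℂ) * α) := by
      rw [hA, eval_sub, eval_C, eval_mul, eval_C, eval_X, ← map_mul, mul_comm α]
    have h2 : B.eval (C (i:ℂ)) = f.comp (X - C (i:ℂ)) := by
      rw [hB, eval_comp, eval_sub, eval_C, eval_X, eval_map]
      rfl
    rw [h1, h2]
  have hGmem : ∀ i : ℤ, G.eval (C (i:ℂ)) ∈ p := by
    intro i
    have h1 := hinv i f hfp
    rw [hL] at h1
    have h2 : (X - C ((i:ℂ) * α)) * f.comp (X - C (i:ℂ)) =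
        (lam ^ i)⁻¹ • (C (lam ^ i) * (X - C ((i:ℂ) * α)) * f.comp (X - C (i:ℂ))) := by
      rw [smul_eq_C_mul, mul_assoc (C (lam ^ i)), ← mul_assoc (C ((lam ^ i)⁻¹)),
        ← map_mul, inv_mul_cancel₀ (zpow_ne_zero i hlam), map_one, one_mul]
    rw [hGeval i, h2]
    exact p.smul_mem _ h1
  -- degrees and leading coefficients
  have hAlin : A = C (-(C α)) * X + C (X : ℂ[X]) := by rw [hA, map_neg]; ring
  have hAne : -(C α : ℂ[X]) ≠ 0 := by
    simp [hα]
  have hAdeg : A.natDegree = 1 := by rw [hAlin]; exact natDegree_linear hAne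
  have hAlc : A.leadingCoeff = -(C α) := by rw [hAlin]; exact leadingCoeff_linear hAne
  have hA0 : A ≠ 0 := fun h => hAne (by rw [← hAlc, h, leadingCoeff_zero])
  have hqlin : (C (X : ℂ[X]) - X : ℂ[X][X]) = C (-1) * X + C (X : ℂ[X]) := by rw [map_neg, map_one]; ring
  have hqne : (-1 : ℂ[X]) ≠ 0 := by norm_num
  have hqdeg : (C (X : ℂ[X]) - X : ℂ[X][X]).natDegree = 1 := by
    rw [hqlin]; exact natDegree_linear hqne
  have hqlc : (C (X : ℂ[X]) - X : ℂ[X][X]).leadingCoeff = -1 := by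
    rw [hqlin]; exact leadingCoeff_linear hqne
  have hCinj : Function.Injective (C : ℂ →+* ℂ[X]) := C_injective
  have hf'0 : f.map (C : ℂ →+* ℂ[X]) ≠ 0 := (Polynomial.map_ne_zero_iff hCinj).mpr hf0
  have hf'deg : (f.map (C : ℂ →+* ℂ[X])).natDegree = n :=
    natDegree_map_eq_of_injective hCinj f
  have hf'lc : (f.map (C : ℂ →+* ℂ[X])).leadingCoeff = C a :=
    leadingCoeff_map_of_injective hCinj f
  have hBdeg : B.natDegree = n := by
    rw [hB, natDegree_comp, hqdeg, mul_one, hf'deg]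
  have hBlc : B.leadingCoeff = C a * (-1) ^ n := by
    rw [hB, leadingCoeff_comp (by rw [hqdeg]; norm_num), hqlc, hf'lc, hf'deg]
  have hB0 : B ≠ 0 := by
    intro h
    have : B.leadingCoeff = 0 := by rw [h, leadingCoeff_zero]
    rw [hBlc] at this
    have : (C a : ℂ[X]) = 0 := by
      rcases Nat.even_or_odd n with he | ho
      · rwa [he.neg_one_pow, mul_one] at this
      · rw [ho.neg_one_pow, mul_neg_one, neg_eq_zero] at this; exact this
    exact ha (hCinj (by simpa using this))
  have hGdeg : G.natDegree = n + 1 := by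
    rw [hG, natDegree_mul hA0 hB0, hAdeg, hBdeg]; ring
  have hGlc : G.coeff (n + 1) = -(C α) * (C a * (-1) ^ n) := by
    rw [← hGdeg, coeff_natDegree, hG, leadingCoeff_mul, hAlc, hBlc]
  -- the constant in p
  set c : ℂ := -α * a * (-1) ^ n with hc
  have hcne : c ≠ 0 := by
    rw [hc]
    apply mul_ne_zero (mul_ne_zero (neg_ne_zero.mpr hα) ha)
    exact pow_ne_zero n (by norm_num)
  have hCc : (C c : ℂ[X]) ∈ p := by
    have hmem := lemA p (n + 1) G (le_of_eq hGdeg) hGmem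
    rw [hGlc] at hmem
    have : -(C α : ℂ[X]) * (C a * (-1) ^ n) = C c := by
      rw [hc]
      simp only [map_mul, map_neg, map_pow, map_one]
      ring
    rwa [this] at hmem
  have hone : (1 : ℂ[X]) ∈ p := by
    have := p.smul_mem c⁻¹ hCc
    rwa [smul_eq_C_mul, ← map_mul, inv_mul_cancel₀ hcne, map_one] at this
  -- monomials
  have hXpow : ∀ k : ℕ, (X ^ k : ℂ[X]) ∈ p := by
    intro k
    induction k with
    | zero => simpa using hone
    | succ k ih =>
      have h1 := hinv 0 _ ih
      rw [hL] at h1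
      have : L 0 (X ^ k) = X ^ (k + 1) := by
        rw [hL]
        simp [pow_succ, mul_comm]
      rw [hL] at this
      rw [this] at h1
      exact h1
  -- conclude
  rw [eq_top_iff]
  intro g hg
  clear hg
  induction g using Polynomial.induction_on with
  | C b =>
    have := p.smul_mem b hone
    rwa [smul_eq_C_mul, mul_one] at this
  | add q r hq hr => exact p.add_mem hq hr
  | monomial k b _ =>
    have := p.smul_mem b (hXpow (k + 1))
    rwa [smul_eq_C_mul] at this
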